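/- arXiv:1804.10004 — 4 statements merged into one kernel-verified Lean document; each statement's English description precedes it below -/
import Mathlib

section
/- For a negation-free ground program Q, the least fixed point of the immediate-consequence operator equals the set of atoms derivable from Q by intuitionistic (in fact minimal) logic, identifying each clause a ← a₁,…,aₙ with the formula a₁ → ⋯ → aₙ → a. -/
namespace ASP

/-- Formulas of minimal implicational propositional logic over atoms `α`. -/
inductive PForm (α : Type) where
  | at_ : α → PForm α
  | imp : PForm α → PForm α → PForm α

/-- Provability in minimal propositional logic (only → introduction/elimination). -/
inductive PPrv {α : Type} : Set (PForm α) → PForm α → Prop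
  | ax {Γ : Set (PForm α)} {φ : PForm α} : φ ∈ Γ → PPrv Γ φ
  | impI {Γ : Set (PForm α)} {φ ψ : PForm α} : PPrv (insert φ Γ) ψ → PPrv Γ (.imp φ ψ)
  | impE {Γ : Set (PForm α)} {φ ψ : PForm α} : PPrv Γ (.imp φ ψ) → PPrv Γ φ → PPrv Γ ψ

end ASP

/-- A (ground, negation-free) definite clause `head ← body`. -/
structure DClause (α : Type) where
  head : α
  body : List α

/-- The immediate-consequence operator of a definite program, as a monotone map. -/
def FopHom {α : Type} (Q : Set (DClause α)) : Set α →o Set α where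
  toFun I := I ∪ {a | ∃ c ∈ Q, c.head = a ∧ ∀ b ∈ c.body, b ∈ I}
  monotone' := by
    intro I J h x hx
    rcases hx with hx | ⟨c, hc, h1, h2⟩
    · exact Or.inl (h hx)
    · exact Or.inr ⟨c, hc, h1, fun b hb => h (h2 b hb)⟩

/-- The clause `a ← a₁,…,aₙ` identified with the formula `a₁ → ⋯ → aₙ → a`. -/
def cform {α : Type} (c : DClause α) : ASP.PForm α :=
  c.body.foldr (fun b f => .imp (.at_ b) f) (.at_ c.head)

section Aux
open ASP

/-- semantics -/
def psem {α : Type} (I : Set α) : PForm α → Prop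
  | .at_ a => a ∈ I
  | .imp φ ψ => psem I φ → psem I ψ

theorem psound {α : Type} (I : Set α) {Γ : Set (PForm α)} {φ : PForm α}
    (h : PPrv Γ φ) (hΓ : ∀ γ ∈ Γ, psem I γ) : psem I φ := by
  induction h with
  | ax hm => exact hΓ _ hm
  | impI _ ih => intro hφ; exact ih (fun γ hγ => by rcases hγ with rfl | hγ; exact hφ; exact hΓ _ hγ)
  | impE _ _ ih1 ih2 => exact ih1 hΓ (ih2 hΓ)

theorem psem_fold {α : Type} (I : Set α) (l : List α) (h : α) :
    psem I (l.foldr (fun b f => .imp (.at_ b) f) (.at_ h)) ↔ ((∀ b ∈ l, b ∈ I) → h ∈ I) := by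
  induction l with
  | nil => simp [psem]
  | cons x xs ih =>
    simp only [List.foldr, psem, ih, List.mem_cons]
    constructor
    · intro H hb; exact H (hb x (Or.inl rfl)) (fun b hb' => hb b (Or.inr hb'))
    · intro H hx hrest; exact H (fun b hb => by rcases hb with rfl | hb; exact hx; exact hrest b hb)

theorem pfold_E {α : Type} {Γ : Set (PForm α)} (l : List α) (h : α)
    (hf : PPrv Γ (l.foldr (fun b f => .imp (.at_ b) f) (.at_ h)))
    (hb : ∀ b ∈ l, PPrv Γ (.at_ b)) : PPrv Γ (.at_ h) := by
  induction l with
  | nil => exact hf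
  | cons x xs ih =>
    exact ih (PPrv.impE hf (hb x List.mem_cons_self)) (fun b hb' => hb b (List.mem_cons_of_mem _ hb'))

end Aux

/-- For a negation-free ground program Q, the least fixed point of the
immediate-consequence operator equals the set of atoms provable from the
clause formulas in minimal implicational logic. -/
theorem stmt2 {α : Type} (Q : Set (DClause α)) (hfin : Q.Finite) :
    OrderHom.lfp (FopHom Q) = {a : α | ASP.PPrv (cform '' Q) (.at_ a)} := by
  apply le_antisymm
  · apply OrderHom.lfp_le
    intro a ha
    rcases ha with ha | ⟨c, hc, rfl, hbody⟩
    · exact ha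
    · exact pfold_E c.body c.head (ASP.PPrv.ax ⟨c, hc, rfl⟩) (fun b hb => hbody b hb)
  · intro a ha
    have := psound (OrderHom.lfp (FopHom Q)) ha (fun γ hγ => ?_)
    · exact this
    · rcases hγ with ⟨c, hc, rfl⟩
      rw [cform, psem_fold]
      intro hb
      rw [show OrderHom.lfp (FopHom Q) = (FopHom Q) (OrderHom.lfp (FopHom Q)) from (OrderHom.map_lfp _).symm]
      exact Or.inr ⟨c, hc, rfl, hb⟩
end

section
/- I(P,M) = { a ∈ B(P) | the program P̄ together with the set M̄ intuitionistically proves a }, where P̄ is obtained from the grounding of P by replacing every negative atom ¬b by a fresh atom b̄, and M̄ = { b̄ | b ∈ B(P) \ M }. -/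
namespace ASP

/-- A ground clause `head ← pos, ¬neg` of an answer set program. -/
structure GClause (α : Type) where
  head : α
  pos : List α
  neg : List α

variable {α : Type}

/-- Immediate-consequence operator of the Gelfond–Lifschitz reduct `P^M`:
`F(I) = I ∪ {a | some clause a ← a₁,…,aₙ of P^M has all aᵢ ∈ I}`. -/
def tcons (P : Set (GClause α)) (M : Set α) : Set α →o Set α where
  toFun I := I ∪ {a | ∃ c ∈ P, c.head = a ∧ (∀ b ∈ c.pos, b ∈ I) ∧ (∀ b ∈ c.neg, b ∉ M)}
  monotone' := by
    intro I J h x hx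
    rcases hx with hx | ⟨c, hc, h1, h2, h3⟩
    · exact Or.inl (h hx)
    · exact Or.inr ⟨c, hc, h1, fun b hb => h (h2 b hb), h3⟩

/-- The interpretation `I(P,M)`: least fixed point of the immediate-consequence
operator of the reduct `P^M`. -/
def interp (P : Set (GClause α)) (M : Set α) : Set α := OrderHom.lfp (tcons P M)

/-- `M` is a stable model (answer set) of `P` iff `M = I(P,M)`. -/
def IsStable (P : Set (GClause α)) (M : Set α) : Prop := M = interp P M

end ASP
/-- The clause of `P̄`: negative atoms `¬b` become fresh barred atoms (`Sum.inr b`),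
and the clause is identified with an implicational formula. -/
def cbar {α : Type} (c : ASP.GClause α) : ASP.PForm (α ⊕ α) :=
  (c.pos.map Sum.inl ++ c.neg.map Sum.inr).foldr
    (fun b f => .imp (.at_ b) f) (.at_ (Sum.inl c.head))

section Aux

open ASP

/-- Evaluation of a formula under a valuation. -/
def peval {β : Type} (v : β → Prop) : PForm β → Prop
  | .at_ b => v b
  | .imp f g => peval v f → peval v g

lemma peval_sound {β : Type} {v : β → Prop} {Γ : Set (PForm β)} {φ : PForm β}
    (h : PPrv Γ φ) (hΓ : ∀ ψ ∈ Γ, peval v ψ) : peval v φ := by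
  induction h with
  | ax hm => exact hΓ _ hm
  | impI _ ih =>
      intro hφ
      exact ih (fun ψ hψ => by rcases hψ with rfl | hψ; exact hφ; exact hΓ _ hψ)
  | impE _ _ ih1 ih2 => exact (ih1 hΓ) (ih2 hΓ)

lemma peval_foldr {β : Type} (v : β → Prop) (l : List β) (base : PForm β) :
    peval v (l.foldr (fun b f => .imp (.at_ b) f) base) ↔
      ((∀ b ∈ l, v b) → peval v base) := by
  induction l with
  | nil => simp [peval]
  | cons x xs ih =>
      simp only [List.foldr_cons, peval, ih, List.mem_cons]
      constructor
      · intro h hall; exact h (hall x (Or.inl rfl)) (fun b hb => hall b (Or.inr hb))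
      · intro h hx hall; exact h (fun b hb => by rcases hb with rfl | hb; exact hx; exact hall b hb)

lemma pprv_foldr {β : Type} {Γ : Set (PForm β)} (l : List β) {base : PForm β}
    (h : PPrv Γ (l.foldr (fun b f => .imp (.at_ b) f) base))
    (hall : ∀ b ∈ l, PPrv Γ (.at_ b)) : PPrv Γ base := by
  induction l with
  | nil => exact h
  | cons x xs ih =>
      exact ih (h.impE (hall x List.mem_cons_self))
        (fun b hb => hall b (List.mem_cons_of_mem _ hb))

end Aux

/-- `I(P,M)` equals the set of atoms `a ∈ B(P)` such that `P̄ ∪ M̄` proves `a`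
in minimal propositional logic, where `M̄ = {b̄ | b ∈ B(P) \ M}`. -/
theorem stmt3 {α : Type} (P : Set (ASP.GClause α)) (hfin : P.Finite)
    (B M : Set α) (hM : M ⊆ B)
    (hP : ∀ c ∈ P, c.head ∈ B ∧ (∀ b ∈ c.pos, b ∈ B) ∧ (∀ b ∈ c.neg, b ∈ B)) :
    ASP.interp P M =
      {a | a ∈ B ∧ ASP.PPrv
        ((cbar '' P) ∪ {f | ∃ b ∈ B, b ∉ M ∧ f = .at_ (Sum.inr b)})
        (.at_ (Sum.inl a))} := by
  set Γ : Set (ASP.PForm (α ⊕ α)) :=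
    (cbar '' P) ∪ {f | ∃ b ∈ B, b ∉ M ∧ f = .at_ (Sum.inr b)} with hΓdef
  apply le_antisymm
  · -- interp ⊆ RHS : lfp_le with the RHS a prefixed point
    apply OrderHom.lfp_le
    rintro a (ha | ⟨c, hc, rfl, hpos, hneg⟩)
    · exact ha
    · obtain ⟨hhB, hposB, hnegB⟩ := hP c hc
      refine ⟨hhB, ?_⟩
      have hcl : ASP.PPrv Γ (cbar c) := .ax (Or.inl ⟨c, hc, rfl⟩)
      refine pprv_foldr _ hcl ?_
      intro b hb
      rcases List.mem_append.mp hb with hb | hb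
      · obtain ⟨b', hb', rfl⟩ := List.mem_map.mp hb
        exact (hpos b' hb').2
      · obtain ⟨b', hb', rfl⟩ := List.mem_map.mp hb
        exact .ax (Or.inr ⟨b', hnegB b' hb', hneg b' hb', rfl⟩)
  · -- RHS ⊆ interp : soundness with valuation
    rintro a ⟨haB, hprv⟩
    set v : α ⊕ α → Prop := fun x => match x with
      | Sum.inl b => b ∈ ASP.interp P M
      | Sum.inr b => b ∉ M with hv
    have := peval_sound (v := v) hprv ?_
    · exact this
    · rintro ψ (⟨c, hc, rfl⟩ | ⟨b, _, hbM, rfl⟩)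
      · rw [cbar, peval_foldr]
        intro hall
        have hfix : ASP.tcons P M (ASP.interp P M) = ASP.interp P M :=
          OrderHom.map_lfp _
        have : c.head ∈ ASP.tcons P M (ASP.interp P M) := by
          refine Or.inr ⟨c, hc, rfl, ?_, ?_⟩
          · intro b hb
            exact hall (Sum.inl b) (List.mem_append.mpr (Or.inl (List.mem_map_of_mem hb)))
          · intro b hb
            exact hall (Sum.inr b) (List.mem_append.mpr (Or.inr (List.mem_map_of_mem hb)))
        rw [hfix] at this
        exact this
      · exact hbM
end

section
/- If R(c̄) ∉ I(P,M), then there exists a refutation tree for R(c̄): a possibly infinite tree labeled by ground atoms whose root is labeled R(c̄), having for every ground clause with target equal to the node label one immediate subtree, which is either a refutation for some positive atom b occurring in the clause body, or a single node labeled b̄ for some b ∈ M with ¬b in the body. -/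
/-- Existence of a (possibly infinite) refutation tree for `a`, expressed
coinductively: a set R of "refutable" atoms containing `a` such that for every
b ∈ R and every ground clause with target b, either some positive body atom is
again in R, or some negated body atom belongs to M. -/
def HasRefutation {α : Type} (P : Set (ASP.GClause α)) (M : Set α) (a : α) : Prop :=
  ∃ R : α → Prop, R a ∧ ∀ b, R b → ∀ c ∈ P, c.head = b →
    ((∃ p ∈ c.pos, R p) ∨ (∃ s ∈ c.neg, s ∈ M))

/-- If `R(c̄) ∉ I(P,M)` then there exists a refutation for `R(c̄)`. -/
theorem stmt9 {α : Type} (P : Set (ASP.GClause α)) (M : Set α) (a : α)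
    (h : a ∉ ASP.interp P M) : HasRefutation P M a := by
  refine ⟨fun b => b ∉ ASP.interp P M, h, ?_⟩
  intro b hb c hc hhead
  by_contra hcon
  push_neg at hcon
  obtain ⟨hpos, hneg⟩ := hcon
  apply hb
  have hfix : ASP.tcons P M (ASP.interp P M) = ASP.interp P M :=
    OrderHom.map_lfp _
  rw [← hfix]
  exact Or.inr ⟨c, hc, hhead, fun p hp => hpos p hp, hneg⟩
end

section
/- An atom Q(ē) belongs to I(P,M) if and only if there exists a derivation tree for Q(ē) without returns, where a derivation tree contains a return if two nodes, one a descendant of the other, justify the same atom of the form R?(d̄). -/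
/-- Derivation trees for an atom from `P̄ ∪ M̄` *without returns*: the visited
set V records the (clause-head) atoms justified on the path from the root, and
no atom may be justified twice on a path. -/
inductive DerivNR {α : Type} (P : Set (ASP.GClause α)) (M : Set α) :
    Set α → α → Prop
  | mk {V : Set α} {a : α} (c : ASP.GClause α) :
      c ∈ P → c.head = a → a ∉ V → (∀ s ∈ c.neg, s ∉ M) →
      (∀ b ∈ c.pos, DerivNR P M (insert a V) b) → DerivNR P M V a

lemma iter_mono {α : Type} (P : Set (ASP.GClause α)) (M : Set α) :
    Monotone fun n => (ASP.tcons P M)^[n] ∅ := by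
  apply monotone_nat_of_le_succ
  intro n
  rw [Function.iterate_succ_apply']
  exact fun a ha => Or.inl ha

lemma deriv_of_iter {α : Type} (P : Set (ASP.GClause α)) (M : Set α) :
    ∀ n (a : α) (V : Set α), a ∈ (ASP.tcons P M)^[n] ∅ →
      (∀ x ∈ V, x ∉ (ASP.tcons P M)^[n] ∅) → DerivNR P M V a := by
  intro n
  induction n with
  | zero => intro a V ha _; simp at ha
  | succ n ih =>
    intro a V ha hV
    by_cases h : a ∈ (ASP.tcons P M)^[n] ∅
    · exact ih a V h fun x hx hc => hV x hx (iter_mono P M (Nat.le_succ n) hc)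
    · have ha0 := ha
      rw [Function.iterate_succ_apply'] at ha
      rcases ha with ha | ⟨c, hc, hh, hpos, hneg⟩
      · exact absurd ha h
      · refine DerivNR.mk c hc hh (fun haV => hV a haV ha0) hneg ?_
        intro b hb
        apply ih b (insert a V) (hpos b hb)
        intro x hx
        rcases hx with rfl | hx
        · exact h
        · exact fun hc' => hV x hx (iter_mono P M (Nat.le_succ n) hc')

lemma list_bound {α : Type} (P : Set (ASP.GClause α)) (M : Set α) :
    ∀ l : List α, (∀ b ∈ l, ∃ n, b ∈ (ASP.tcons P M)^[n] ∅) →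
      ∃ N, ∀ b ∈ l, b ∈ (ASP.tcons P M)^[N] ∅ := by
  intro l
  induction l with
  | nil => intro _; exact ⟨0, by simp⟩
  | cons x xs ih =>
    intro h
    obtain ⟨n, hn⟩ := h x List.mem_cons_self
    obtain ⟨N, hN⟩ := ih fun b hb => h b (List.mem_cons_of_mem x hb)
    refine ⟨max n N, ?_⟩
    intro b hb
    rcases List.mem_cons.mp hb with rfl | hb
    · exact iter_mono P M (le_max_left n N) hn
    · exact iter_mono P M (le_max_right n N) (hN b hb)

/-- An atom belongs to I(P,M) iff it has a derivation tree without returns. -/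
theorem stmt11 {α : Type} (P : Set (ASP.GClause α)) (M : Set α) (a : α) :
    a ∈ ASP.interp P M ↔ DerivNR P M ∅ a := by
  constructor
  · intro ha
    have hsub : ASP.interp P M ⊆ ⋃ n, (ASP.tcons P M)^[n] ∅ := by
      apply OrderHom.lfp_le
      intro b hb
      rcases hb with hb | ⟨c, hc, hh, hpos, hneg⟩
      · exact hb
      · obtain ⟨N, hN⟩ := list_bound P M c.pos fun b hb => Set.mem_iUnion.mp (hpos b hb)
        refine Set.mem_iUnion.mpr ⟨N + 1, ?_⟩
        rw [Function.iterate_succ_apply']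
        exact Or.inr ⟨c, hc, hh, hN, hneg⟩
    obtain ⟨n, hn⟩ := Set.mem_iUnion.mp (hsub ha)
    exact deriv_of_iter P M n a ∅ hn (by simp)
  · intro h
    have key : ∀ (V : Set α) (b : α), DerivNR P M V b → b ∈ ASP.interp P M := by
      intro V b hb
      induction hb with
      | mk c hc hh _ hneg _ ih =>
        show _ ∈ OrderHom.lfp (ASP.tcons P M)
        rw [← OrderHom.map_lfp (ASP.tcons P M)]
        exact Or.inr ⟨c, hc, hh, ih, hneg⟩
    exact key ∅ a h
end
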